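/- arXiv:1511.09041 — 2 statements merged into one kernel-verified Lean document; each statement's English description precedes it below -/
import Mathlib

section
/- Let b1, b2 : [0,T] × ℝ → ℝ be Borel measurable, uniformly Lipschitz in the second variable, with b_i(·,0) square integrable. Let f1, f2 be right-continuous square-integrable functions on [0,T] with f1 = f2 + A where A is a nondecreasing right-continuous function with A(0) = 0. Let x1 ≥ x2 be reals, and for i = 1,2 let y^i be the unique right-continuous square-integrable solution of y^i(t) = x_i + ∫_0^t b_i(s, y^i(s)) ds + f_i(t). If b1(t, y²(t)) ≥ b2(t, y²(t)) for a.e. t, then y¹(t) ≥ y²(t) for all t ∈ [0,T]. -/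
open MeasureTheory Set

/-- Comparison lemma for deterministic integral equations (Lemma 6.2, weak inequality). -/
theorem stmt_0 (T : ℝ) (hT : 0 < T)
    (b₁ b₂ : ℝ → ℝ → ℝ) (C : NNReal)
    (hb₁m : Measurable (Function.uncurry b₁)) (hb₂m : Measurable (Function.uncurry b₂))
    (hb₁lip : ∀ t, LipschitzWith C (b₁ t)) (hb₂lip : ∀ t, LipschitzWith C (b₂ t))
    (hb₁0 : MemLp (fun t => b₁ t 0) 2 (volume.restrict (Icc 0 T)))
    (hb₂0 : MemLp (fun t => b₂ t 0) 2 (volume.restrict (Icc 0 T)))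
    (f₁ f₂ A : ℝ → ℝ)
    (hf₂rc : ∀ t ∈ Icc (0:ℝ) T, ContinuousWithinAt f₂ (Ici t) t)
    (hf₂L2 : MemLp f₂ 2 (volume.restrict (Icc 0 T)))
    (hf₁rc : ∀ t ∈ Icc (0:ℝ) T, ContinuousWithinAt f₁ (Ici t) t)
    (hf₁L2 : MemLp f₁ 2 (volume.restrict (Icc 0 T)))
    (hAmono : MonotoneOn A (Icc 0 T))
    (hArc : ∀ t ∈ Icc (0:ℝ) T, ContinuousWithinAt A (Ici t) t)
    (hA0 : A 0 = 0)
    (hf : ∀ t ∈ Icc (0:ℝ) T, f₁ t = f₂ t + A t)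
    (x₁ x₂ : ℝ) (hx : x₂ ≤ x₁)
    (y₁ y₂ : ℝ → ℝ)
    (hy₁rc : ∀ t ∈ Icc (0:ℝ) T, ContinuousWithinAt y₁ (Ici t) t)
    (hy₂rc : ∀ t ∈ Icc (0:ℝ) T, ContinuousWithinAt y₂ (Ici t) t)
    (hy₁L2 : MemLp y₁ 2 (volume.restrict (Icc 0 T)))
    (hy₂L2 : MemLp y₂ 2 (volume.restrict (Icc 0 T)))
    (heq₁ : ∀ t ∈ Icc (0:ℝ) T, y₁ t = x₁ + (∫ s in (0:ℝ)..t, b₁ s (y₁ s)) + f₁ t)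
    (heq₂ : ∀ t ∈ Icc (0:ℝ) T, y₂ t = x₂ + (∫ s in (0:ℝ)..t, b₂ s (y₂ s)) + f₂ t)
    (hcomp : ∀ᵐ t ∂(volume.restrict (Icc (0:ℝ) T)), b₂ t (y₂ t) ≤ b₁ t (y₂ t)) :
    ∀ t ∈ Icc (0:ℝ) T, y₂ t ≤ y₁ t := by
  have h0T : (0:ℝ) ∈ Icc (0:ℝ) T := ⟨le_rfl, hT.le⟩
  haveI : IsFiniteMeasure (volume.restrict (Icc (0:ℝ) T)) := by
    constructor
    rw [Measure.restrict_apply_univ]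
    exact measure_Icc_lt_top
  -- measurability of integrands
  have hy₁m : AEMeasurable y₁ (volume.restrict (Icc (0:ℝ) T)) :=
    hy₁L2.aestronglyMeasurable.aemeasurable
  have hy₂m : AEMeasurable y₂ (volume.restrict (Icc (0:ℝ) T)) :=
    hy₂L2.aestronglyMeasurable.aemeasurable
  -- a generic integrability fact
  have key_int : ∀ (b : ℝ → ℝ → ℝ) (y : ℝ → ℝ), Measurable (Function.uncurry b) →
      (∀ t, LipschitzWith C (b t)) → MemLp (fun t => b t 0) 2 (volume.restrict (Icc 0 T)) →
      MemLp y 2 (volume.restrict (Icc 0 T)) →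
      Integrable (fun s => b s (y s)) (volume.restrict (Icc (0:ℝ) T)) := by
    intro b y hbm hblip hb0 hy
    have hym : AEMeasurable y (volume.restrict (Icc (0:ℝ) T)) := hy.aestronglyMeasurable.aemeasurable
    have hm : AEMeasurable (fun s => b s (y s)) (volume.restrict (Icc (0:ℝ) T)) :=
      hbm.comp_aemeasurable (aemeasurable_id.prodMk hym)
    have hdom : Integrable (fun s => |b s 0| + C * |y s|) (volume.restrict (Icc (0:ℝ) T)) :=
      ((hb0.integrable one_le_two).abs).add (((hy.integrable one_le_two).abs).const_mul C)
    refine hdom.mono' hm.aestronglyMeasurable (Filter.Eventually.of_forall fun s => ?_)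
    have hL : |b s (y s) - b s 0| ≤ C * |y s| := by
      have := (hblip s).dist_le_mul (y s) 0
      simpa [Real.dist_eq] using this
    have : |b s (y s)| ≤ |b s 0| + C * |y s| := by
      have h1 : |b s (y s)| ≤ |b s 0| + |b s (y s) - b s 0| := by
        have := abs_add_le (b s 0) (b s (y s) - b s 0)
        simpa using this
      linarith
    simpa [Real.norm_eq_abs] using this
  have hp₁int : Integrable (fun s => b₁ s (y₁ s)) (volume.restrict (Icc (0:ℝ) T)) :=
    key_int b₁ y₁ hb₁m hb₁lip hb₁0 hy₁L2
  have hp₂int : Integrable (fun s => b₂ s (y₂ s)) (volume.restrict (Icc (0:ℝ) T)) :=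
    key_int b₂ y₂ hb₂m hb₂lip hb₂0 hy₂L2
  have hp₁₂int : Integrable (fun s => b₁ s (y₂ s)) (volume.restrict (Icc (0:ℝ) T)) :=
    key_int b₁ y₂ hb₁m hb₁lip hb₁0 hy₂L2
  have hp₁m : AEMeasurable (fun s => b₁ s (y₁ s)) (volume.restrict (Icc (0:ℝ) T)) :=
    hb₁m.comp_aemeasurable (aemeasurable_id.prodMk hy₁m)
  have hp₂m : AEMeasurable (fun s => b₂ s (y₂ s)) (volume.restrict (Icc (0:ℝ) T)) :=
    hb₂m.comp_aemeasurable (aemeasurable_id.prodMk hy₂m)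
  -- measurable globally-defined versions of the integrands, zero outside [0,T]
  set q₁ : ℝ → ℝ := (Icc (0:ℝ) T).indicator (hp₁m.mk _) with hq₁def
  set q₂ : ℝ → ℝ := (Icc (0:ℝ) T).indicator (hp₂m.mk _) with hq₂def
  have hq₁meas : Measurable q₁ := (hp₁m.measurable_mk).indicator measurableSet_Icc
  have hq₂meas : Measurable q₂ := (hp₂m.measurable_mk).indicator measurableSet_Icc
  have hq₁int : Integrable q₁ volume := by
    rw [hq₁def]
    exact (integrable_indicator_iff measurableSet_Icc).2 (hp₁int.congr hp₁m.ae_eq_mk)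
  have hq₂int : Integrable q₂ volume := by
    rw [hq₂def]
    exact (integrable_indicator_iff measurableSet_Icc).2 (hp₂int.congr hp₂m.ae_eq_mk)
  -- a.e. equality on [0,T]
  have hq₁ae : (fun s => b₁ s (y₁ s)) =ᵐ[volume.restrict (Icc (0:ℝ) T)] q₁ := by
    refine hp₁m.ae_eq_mk.trans ?_
    filter_upwards [ae_restrict_mem measurableSet_Icc] with s hs
    rw [hq₁def, indicator_of_mem hs]
  have hq₂ae : (fun s => b₂ s (y₂ s)) =ᵐ[volume.restrict (Icc (0:ℝ) T)] q₂ := by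
    refine hp₂m.ae_eq_mk.trans ?_
    filter_upwards [ae_restrict_mem measurableSet_Icc] with s hs
    rw [hq₂def, indicator_of_mem hs]
  -- equality of interval integrals on subintervals of [0,T]
  have hiq : ∀ (p q : ℝ → ℝ), (p =ᵐ[volume.restrict (Icc (0:ℝ) T)] q) →
      ∀ u v, (0:ℝ) ≤ u → v ≤ T → u ≤ v → (∫ s in u..v, p s) = ∫ s in u..v, q s := by
    intro p q hpq u v hu hv huv
    rw [intervalIntegral.integral_of_le huv, intervalIntegral.integral_of_le huv]
    refine setIntegral_congr_ae measurableSet_Ioc ?_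
    have h' : ∀ᵐ s ∂volume, s ∈ Icc (0:ℝ) T → p s = q s :=
      (ae_restrict_iff' measurableSet_Icc).mp hpq
    filter_upwards [h'] with s hs hsmem
    exact hs ⟨hu.trans hsmem.1.le, hsmem.2.trans hv⟩
  -- the clamp function
  have hclamp : ∀ u, u ∈ Icc (0:ℝ) T → max 0 (min u T) = u := by
    intro u hu
    rw [min_eq_left hu.2, max_eq_right hu.1]
  -- the difference function w
  set w : ℝ → ℝ := fun u =>
    (x₁ - x₂) + ((∫ s in (0:ℝ)..u, q₁ s) - ∫ s in (0:ℝ)..u, q₂ s) + A (max 0 (min u T)) with hwdef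
  have hwz : ∀ t ∈ Icc (0:ℝ) T, w t = y₁ t - y₂ t := by
    intro t ht
    have e₁ : (∫ s in (0:ℝ)..t, b₁ s (y₁ s)) = ∫ s in (0:ℝ)..t, q₁ s :=
      hiq _ _ hq₁ae 0 t le_rfl ht.2 ht.1
    have e₂ : (∫ s in (0:ℝ)..t, b₂ s (y₂ s)) = ∫ s in (0:ℝ)..t, q₂ s :=
      hiq _ _ hq₂ae 0 t le_rfl ht.2 ht.1
    rw [hwdef]
    simp only [hclamp t ht]
    rw [heq₁ t ht, heq₂ t ht, hf t ht, ← e₁, ← e₂]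
    ring
  -- w is measurable
  have hJ₁cont : Continuous (fun u => ∫ s in (0:ℝ)..u, q₁ s) :=
    intervalIntegral.continuous_primitive (fun a b => hq₁int.intervalIntegrable) 0
  have hJ₂cont : Continuous (fun u => ∫ s in (0:ℝ)..u, q₂ s) :=
    intervalIntegral.continuous_primitive (fun a b => hq₂int.intervalIntegrable) 0
  have hAcmono : Monotone (fun u => A (max 0 (min u T))) := by
    intro u v huv
    exact hAmono ⟨le_max_left _ _, max_le hT.le (min_le_right _ _)⟩
      ⟨le_max_left _ _, max_le hT.le (min_le_right _ _)⟩
      (max_le_max le_rfl (min_le_min_right _ huv))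
  have hwmeas : Measurable w := by
    apply Measurable.add
    apply Measurable.add measurable_const
    exact (hJ₁cont.measurable.sub hJ₂cont.measurable)
    exact hAcmono.measurable
  -- w is integrable on [0,T]
  have hwint : IntegrableOn w (Icc (0:ℝ) T) volume := by
    have hz : Integrable (fun t => y₁ t - y₂ t) (volume.restrict (Icc (0:ℝ) T)) :=
      (hy₁L2.integrable one_le_two).sub (hy₂L2.integrable one_le_two)
    refine hz.congr ?_
    filter_upwards [ae_restrict_mem measurableSet_Icc] with s hs
    exact (hwz s hs).symm
  have hwabsint : IntegrableOn (fun s => |w s|) (Icc (0:ℝ) T) volume := hwint.abs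
  -- interval integrability of |w| within [0,T]
  have hwii : ∀ u v, (0:ℝ) ≤ u → v ≤ T → u ≤ v →
      IntervalIntegrable (fun s => |w s|) volume u v := by
    intro u v hu hv huv
    rw [intervalIntegrable_iff]
    refine hwabsint.mono_set ?_
    rw [uIoc_of_le huv]
    exact fun s hs => ⟨hu.trans hs.1.le, hs.2.trans hv⟩
  -- right-continuity of w on [0,T]
  have hwrc : ∀ t ∈ Icc (0:ℝ) T, ContinuousWithinAt w (Ici t) t := by
    intro t ht
    have hAc : ContinuousWithinAt (fun u => A (max 0 (min u T))) (Ici t) t := by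
      have hclc : ContinuousWithinAt (fun u => max 0 (min u T)) (Ici t) t :=
        (continuous_const.max (continuous_id.min continuous_const)).continuousWithinAt
    -- compose with A, using that clamp t = t and clamp maps Ici t into Ici t
      have h1 : ContinuousWithinAt A (Ici t) (max 0 (min t T)) := by
        rw [hclamp t ht]; exact hArc t ht
      refine ContinuousWithinAt.comp (g := A) (f := fun u => max 0 (min u T)) h1 hclc ?_
      intro u hu
      have : t ≤ max 0 (min u T) := by
        calc t = max 0 (min t T) := (hclamp t ht).symm
        _ ≤ max 0 (min u T) := max_le_max le_rfl (min_le_min_right _ hu)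
      exact this
    exact (continuousWithinAt_const.add
      ((hJ₁cont.continuousWithinAt).sub (hJ₂cont.continuousWithinAt))).add hAc
  -- the key integral inequality
  have key : ∀ σ t, σ ∈ Icc (0:ℝ) T → t ∈ Icc (0:ℝ) T → σ ≤ t →
      w σ - C * (∫ s in σ..t, |w s|) ≤ w t := by
    intro σ t hσ ht hσt
    have hq₁ii : IntervalIntegrable q₁ volume σ t := hq₁int.intervalIntegrable
    have hq₂ii : IntervalIntegrable q₂ volume σ t := hq₂int.intervalIntegrable
    have e1 : w t - w σ = ((∫ s in σ..t, q₁ s) - ∫ s in σ..t, q₂ s)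
        + (A (max 0 (min t T)) - A (max 0 (min σ T))) := by
      have i1 : (∫ s in (0:ℝ)..t, q₁ s) - (∫ s in (0:ℝ)..σ, q₁ s) = ∫ s in σ..t, q₁ s :=
        intervalIntegral.integral_interval_sub_left hq₁int.intervalIntegrable
          hq₁int.intervalIntegrable
      have i2 : (∫ s in (0:ℝ)..t, q₂ s) - (∫ s in (0:ℝ)..σ, q₂ s) = ∫ s in σ..t, q₂ s :=
        intervalIntegral.integral_interval_sub_left hq₂int.intervalIntegrable
          hq₂int.intervalIntegrable
      rw [hwdef]
      dsimp only
      linarith [i1, i2]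
    have hAmono' : A (max 0 (min σ T)) ≤ A (max 0 (min t T)) := hAcmono hσt
    -- a.e. lower bound for q₁ - q₂ on [0,T]
    have hae : (fun s => -((C:ℝ) * |w s|)) ≤ᵐ[volume.restrict (Icc (0:ℝ) T)]
        (fun s => q₁ s - q₂ s) := by
      filter_upwards [hq₁ae, hq₂ae, hcomp, ae_restrict_mem measurableSet_Icc] with s h1 h2 h3 h4
      rw [← h1, ← h2]
      have hlip : |b₁ s (y₁ s) - b₁ s (y₂ s)| ≤ C * |y₁ s - y₂ s| := by
        have := (hb₁lip s).dist_le_mul (y₁ s) (y₂ s)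
        simpa [Real.dist_eq] using this
      have hw' : w s = y₁ s - y₂ s := hwz s h4
      have h5 : b₁ s (y₁ s) - b₂ s (y₂ s)
          = (b₁ s (y₁ s) - b₁ s (y₂ s)) + (b₁ s (y₂ s) - b₂ s (y₂ s)) := by ring
      have h6 : -(C * |y₁ s - y₂ s|) ≤ b₁ s (y₁ s) - b₁ s (y₂ s) := by
        have := neg_abs_le (b₁ s (y₁ s) - b₁ s (y₂ s))
        linarith
      rw [hw']
      linarith
    have hae' : (fun s => -((C:ℝ) * |w s|)) ≤ᵐ[volume.restrict (Icc σ t)]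
        (fun s => q₁ s - q₂ s) :=
      ae_restrict_of_ae_restrict_of_subset (Icc_subset_Icc hσ.1 ht.2) hae
    have hmono := intervalIntegral.integral_mono_ae_restrict hσt
      (((hwii σ t hσ.1 ht.2 hσt).const_mul (C:ℝ)).neg) (hq₁ii.sub hq₂ii) hae'
    simp only [Pi.neg_apply] at hmono
    rw [intervalIntegral.integral_sub hq₁ii hq₂ii] at hmono
    have hneg : (∫ s in σ..t, -(C * |w s|)) = -(C * ∫ s in σ..t, |w s|) := by
      rw [intervalIntegral.integral_neg, intervalIntegral.integral_const_mul]
    rw [hneg] at hmono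
    linarith [e1, hAmono', hmono]
  -- main claim: w ≥ 0 on [0,T]
  have main : ∀ t ∈ Icc (0:ℝ) T, 0 ≤ w t := by
    by_contra hcon
    push_neg at hcon
    obtain ⟨t₁, ht₁, hwt₁⟩ := hcon
    have hw0 : w 0 = x₁ - x₂ := by
      rw [hwz 0 h0T, heq₁ 0 h0T, heq₂ 0 h0T, hf 0 h0T, hA0]
      simp
    set S := {s : ℝ | s ∈ Icc (0:ℝ) t₁ ∧ 0 ≤ w s} with hSdef
    have hS0 : (0:ℝ) ∈ S := ⟨⟨le_rfl, ht₁.1⟩, by rw [hw0]; linarith⟩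
    have hSne : S.Nonempty := ⟨0, hS0⟩
    have hSb : BddAbove S := ⟨t₁, fun s hs => hs.1.2⟩
    set τ := sSup S with hτdef
    have hτmem : τ ∈ Icc (0:ℝ) t₁ := ⟨le_csSup hSb hS0, csSup_le hSne fun s hs => hs.1.2⟩
    have hτT : τ ∈ Icc (0:ℝ) T := ⟨hτmem.1, hτmem.2.trans ht₁.2⟩
    -- primitive of |w|
    set I : ℝ → ℝ := fun u => ∫ s in (0:ℝ)..u, |w s| with hIdef
    have hIcont : ContinuousOn I (Icc (0:ℝ) T) := by
      have := intervalIntegral.continuousOn_primitive_interval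
        (μ := volume) (f := fun s => |w s|) (a := (0:ℝ)) (b := T)
        (by rwa [uIcc_of_le hT.le])
      rwa [uIcc_of_le hT.le] at this
    have hIdiff : ∀ u v, (0:ℝ) ≤ u → v ≤ T → u ≤ v → (∫ s in u..v, |w s|) = I v - I u := by
      intro u v hu hv huv
      rw [eq_sub_iff_add_eq, hIdef]
      dsimp only
      rw [add_comm]
      exact intervalIntegral.integral_add_adjacent_intervals
        (hwii 0 u le_rfl (huv.trans hv) hu) (hwii u v hu hv huv)
    have hImono : ∀ u v, (0:ℝ) ≤ u → v ≤ T → u ≤ v → I u ≤ I v := by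
      intro u v hu hv huv
      have h1 : (0:ℝ) ≤ ∫ s in u..v, |w s| :=
        intervalIntegral.integral_nonneg huv (fun s _ => abs_nonneg _)
      have := hIdiff u v hu hv huv
      linarith
    -- w τ ≥ 0
    have hwτ : 0 ≤ w τ := by
      have hstep : ∀ δ, 0 < δ → -(C * (I τ - I (max 0 (τ - δ)))) ≤ w τ := by
        intro δ hδ
        obtain ⟨σ, hσS, hσgt⟩ := exists_lt_of_lt_csSup hSne (by linarith [hτmem.1] : τ - δ < sSup S)
        have hσIcc : σ ∈ Icc (0:ℝ) T := ⟨hσS.1.1, hσS.1.2.trans ht₁.2⟩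
        have hστ : σ ≤ τ := le_csSup hSb hσS
        have hk := key σ τ hσIcc hτT hστ
        have hIστ : (∫ s in σ..τ, |w s|) = I τ - I σ := hIdiff σ τ hσIcc.1 hτT.2 hστ
        have hm : max 0 (τ - δ) ≤ σ := max_le hσS.1.1 hσgt.le
        have hmIcc0 : (0:ℝ) ≤ max 0 (τ - δ) := le_max_left _ _
        have hmIccT : max 0 (τ - δ) ≤ T := by
          refine max_le hT.le ?_
          linarith [hτT.2]
        have hI' : I (max 0 (τ - δ)) ≤ I σ := hImono _ σ hmIcc0 hσIcc.2 hm
        have hCpos : (0:ℝ) ≤ (C:ℝ) := C.coe_nonneg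
        nlinarith [hσS.2]
      -- take the limit δ → 0⁺
      have hIτ : ContinuousWithinAt I (Icc (0:ℝ) T) τ := hIcont τ hτT
      have htend : Filter.Tendsto (fun δ : ℝ => max 0 (τ - δ)) (nhdsWithin 0 (Ioi 0))
          (nhdsWithin τ (Icc (0:ℝ) T)) := by
        rw [tendsto_nhdsWithin_iff]
        constructor
        · have h0 : Filter.Tendsto (fun δ : ℝ => max 0 (τ - δ)) (nhds 0) (nhds (max 0 (τ - 0))) :=
            (continuous_const.max (continuous_const.sub continuous_id)).tendsto' 0 _ rfl
          have h0' : Filter.Tendsto (fun δ : ℝ => max 0 (τ - δ)) (nhds 0) (nhds τ) := by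
            simpa [max_eq_right hτT.1] using h0
          exact h0'.mono_left nhdsWithin_le_nhds
        · filter_upwards [self_mem_nhdsWithin] with δ hδ
          have hδ' : (0:ℝ) < δ := hδ
          constructor
          · exact le_max_left _ _
          · refine max_le hT.le ?_
            linarith [hτT.2]
      have hlim : Filter.Tendsto (fun δ : ℝ => -(C * (I τ - I (max 0 (τ - δ)))))
          (nhdsWithin 0 (Ioi 0)) (nhds 0) := by
        have h1 : Filter.Tendsto (fun δ : ℝ => I (max 0 (τ - δ))) (nhdsWithin 0 (Ioi 0))
            (nhds (I τ)) := hIτ.tendsto.comp htend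
        have h2 : Filter.Tendsto (fun δ : ℝ => -(C * (I τ - I (max 0 (τ - δ)))))
            (nhdsWithin 0 (Ioi 0)) (nhds (-(C * (I τ - I τ)))) :=
          (((tendsto_const_nhds.sub h1).const_mul (C:ℝ)).neg)
        simpa using h2
      exact le_of_tendsto hlim (Filter.eventually_of_mem self_mem_nhdsWithin hstep)
    have hτt₁ : τ < t₁ := by
      rcases lt_or_eq_of_le hτmem.2 with h | h
      · exact h
      · exfalso; rw [h] at hwτ; linarith
    have hneg : ∀ s, τ < s → s ≤ t₁ → w s < 0 := by
      intro s hs hs'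
      by_contra hns
      push_neg at hns
      have hsS : s ∈ S := ⟨⟨hτmem.1.trans hs.le, hs'⟩, hns⟩
      exact absurd (le_csSup hSb hsS) (not_le.mpr hs)
    -- Gronwall setup
    set g : ℝ → ℝ := fun s => max (-(w s)) 0 with hgdef
    have hg_apply : ∀ s, g s = max (-(w s)) 0 := fun _ => rfl
    have hgmeas : Measurable g := (hwmeas.neg).max measurable_const
    have hgint : IntegrableOn g (Icc (0:ℝ) T) volume := by
      refine hwabsint.mono' hgmeas.aestronglyMeasurable ?_
      refine Filter.Eventually.of_forall fun s => ?_
      rw [Real.norm_eq_abs, hg_apply s]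
      rcases le_or_gt 0 (w s) with h | h
      · rw [max_eq_right (by linarith), abs_zero]; exact abs_nonneg _
      · rw [max_eq_left (by linarith : (0:ℝ) ≤ -(w s)), abs_of_pos (by linarith), abs_of_neg h]
    have hgii : ∀ u v, (0:ℝ) ≤ u → v ≤ T → u ≤ v → IntervalIntegrable g volume u v := by
      intro u v hu hv huv
      rw [intervalIntegrable_iff]
      refine hgint.mono_set ?_
      rw [uIoc_of_le huv]
      exact fun s hs => ⟨hu.trans hs.1.le, hs.2.trans hv⟩
    set h : ℝ → ℝ := fun u => ∫ s in τ..u, g s with hhdef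
    have hh_apply : ∀ u, h u = ∫ s in τ..u, g s := fun _ => rfl
    have hht₁T : t₁ ≤ T := ht₁.2
    have hhcont : ContinuousOn h (Icc τ t₁) := by
      have hint : IntegrableOn g (uIcc τ t₁) volume := by
        rw [uIcc_of_le hτt₁.le]
        exact hgint.mono_set (fun s hs => ⟨hτT.1.trans hs.1, hs.2.trans hht₁T⟩)
      have := intervalIntegral.continuousOn_primitive_interval (μ := volume) hint
      rwa [uIcc_of_le hτt₁.le] at this
    have hgeqabs : ∀ t, τ < t → t ≤ t₁ → (∫ s in τ..t, |w s|) = h t := by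
      intro t htτ htt₁
      rw [hh_apply]
      rw [intervalIntegral.integral_of_le htτ.le, intervalIntegral.integral_of_le htτ.le]
      refine setIntegral_congr_fun measurableSet_Ioc fun s hs => ?_
      have hws : w s < 0 := hneg s hs.1 (hs.2.trans htt₁)
      rw [hg_apply s, abs_of_neg hws, max_eq_left (by linarith : (0:ℝ) ≤ -(w s))]
    have hhnonneg : ∀ t, τ ≤ t → 0 ≤ h t := by
      intro t htτ
      exact intervalIntegral.integral_nonneg htτ (fun s _ => le_max_right _ _)
    have hh' : ∀ t ∈ Ico τ t₁, HasDerivWithinAt h (g t) (Ici t) t := by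
      intro t ht
      have htT : t ∈ Icc (0:ℝ) T := ⟨hτT.1.trans ht.1, ht.2.le.trans hht₁T⟩
      refine intervalIntegral.integral_hasDerivWithinAt_right
        (hgii τ t hτT.1 htT.2 ht.1) ?_ ?_
      · exact hgmeas.stronglyMeasurable.stronglyMeasurableAtFilter
      · have hc : ContinuousWithinAt (fun s => max (-(w s)) 0) (Ici t) t :=
          ((hwrc t htT).neg).max continuousWithinAt_const
        exact hc.mono Ioi_subset_Ici_self
    have hbound : ∀ t ∈ Ico τ t₁, ‖g t‖ ≤ (C:ℝ) * ‖h t‖ + 0 := by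
      intro t ht
      have htT : t ∈ Icc (0:ℝ) T := ⟨hτT.1.trans ht.1, ht.2.le.trans hht₁T⟩
      rcases eq_or_lt_of_le ht.1 with heq | hlt
      · -- t = τ
        rw [← heq]
        have hz : g τ = 0 := by
          rw [hg_apply τ, max_eq_right (by linarith)]
        rw [hz, norm_zero]
        positivity
      · -- τ < t
        have hwt : w t < 0 := hneg t hlt ht.2.le
        have hk := key τ t hτT htT hlt.le
        have habs : (∫ s in τ..t, |w s|) = h t := hgeqabs t hlt ht.2.le
        have hgt : g t = -(w t) := by
          rw [hg_apply t, max_eq_left (by linarith : (0:ℝ) ≤ -(w t))]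
        have hht : 0 ≤ h t := hhnonneg t hlt.le
        rw [Real.norm_eq_abs, Real.norm_eq_abs, hgt, abs_of_pos (by linarith),
          abs_of_nonneg hht]
        rw [habs] at hk
        linarith
    have hgron := norm_le_gronwallBound_of_norm_deriv_right_le (δ := 0) (K := (C:ℝ)) (ε := 0)
      hhcont hh'
      (by rw [hh_apply, intervalIntegral.integral_same, norm_zero]) hbound
    have hht₁ : ‖h t₁‖ ≤ 0 := by
      have := hgron t₁ (right_mem_Icc.mpr hτt₁.le)
      rwa [gronwallBound_ε0_δ0] at this
    have hht₁0 : h t₁ = 0 := by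
      have h1 := hhnonneg t₁ hτt₁.le
      have h2 : |h t₁| ≤ 0 := by rwa [Real.norm_eq_abs] at hht₁
      rw [abs_of_nonneg h1] at h2
      linarith
    -- contradiction
    have hk := key τ t₁ hτT ht₁ hτt₁.le
    have habs : (∫ s in τ..t₁, |w s|) = h t₁ := hgeqabs t₁ hτt₁ le_rfl
    rw [habs, hht₁0] at hk
    simp only [mul_zero, sub_zero] at hk
    linarith
  -- conclusion
  intro t ht
  have h0 := main t ht
  rw [hwz t ht] at h0
  linarith
end

section
/- Under the hypotheses of the comparison lemma for the deterministic integral equations y^i(t) = x_i + ∫_0^t b_i(s, y^i(s)) ds + f_i(t) (with f1 = f2 + A, A nondecreasing right-continuous with A(0)=0, and b1(t, y²(t)) ≥ b2(t, y²(t)) a.e.), if moreover x1 > x2 strictly, then y¹(t) > y²(t) for all t ∈ [0,T]. -/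
open MeasureTheory Set

private lemma finite_restrict (T : ℝ) :
    IsFiniteMeasure ((volume : Measure ℝ).restrict (Icc 0 T)) := by
  constructor
  rw [Measure.restrict_apply_univ, Real.volume_Icc]
  exact ENNReal.ofReal_lt_top

private lemma aux_int (T : ℝ) (b : ℝ → ℝ → ℝ) (C : NNReal)
    (hbm : Measurable (Function.uncurry b))
    (hblip : ∀ t, LipschitzWith C (b t))
    (hb0 : MemLp (fun t => b t 0) 2 (volume.restrict (Icc 0 T)))
    (y : ℝ → ℝ) (hyL2 : MemLp y 2 (volume.restrict (Icc 0 T))) :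
    IntegrableOn (fun s => b s (y s)) (Icc 0 T) volume := by
  haveI := finite_restrict T
  have hb0i : Integrable (fun t => b t 0) (volume.restrict (Icc 0 T)) :=
    hb0.integrable one_le_two
  have hyi : Integrable y (volume.restrict (Icc 0 T)) := hyL2.integrable one_le_two
  have hpair : AEMeasurable (fun s => (s, y s)) (volume.restrict (Icc 0 T)) :=
    aemeasurable_id.prodMk hyL2.aestronglyMeasurable.aemeasurable
  have hmeas : AEStronglyMeasurable (fun s => b s (y s)) (volume.restrict (Icc 0 T)) :=
    (hbm.comp_aemeasurable hpair).aestronglyMeasurable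
  refine (hb0i.norm.add (hyi.norm.const_mul (C : ℝ))).mono' hmeas ?_
  refine Filter.Eventually.of_forall fun s => ?_
  have h1 : |b s (y s) - b s 0| ≤ (C : ℝ) * |y s| := by
    have := (hblip s).dist_le_mul (y s) 0
    simpa [Real.dist_eq] using this
  have h2 : |b s (y s)| ≤ |b s (y s) - b s 0| + |b s 0| := by
    have := abs_add_le (b s (y s) - b s 0) (b s 0)
    simpa using this
  simp only [Pi.add_apply, Real.norm_eq_abs]
  linarith

/-- Comparison lemma for deterministic integral equations (Lemma 6.2, strict inequality). -/
theorem stmt_1 (T : ℝ) (hT : 0 < T)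
    (b₁ b₂ : ℝ → ℝ → ℝ) (C : NNReal)
    (hb₁m : Measurable (Function.uncurry b₁)) (hb₂m : Measurable (Function.uncurry b₂))
    (hb₁lip : ∀ t, LipschitzWith C (b₁ t)) (hb₂lip : ∀ t, LipschitzWith C (b₂ t))
    (hb₁0 : MemLp (fun t => b₁ t 0) 2 (volume.restrict (Icc 0 T)))
    (hb₂0 : MemLp (fun t => b₂ t 0) 2 (volume.restrict (Icc 0 T)))
    (f₁ f₂ A : ℝ → ℝ)
    (hf₂rc : ∀ t ∈ Icc (0:ℝ) T, ContinuousWithinAt f₂ (Ici t) t)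
    (hf₂L2 : MemLp f₂ 2 (volume.restrict (Icc 0 T)))
    (hf₁rc : ∀ t ∈ Icc (0:ℝ) T, ContinuousWithinAt f₁ (Ici t) t)
    (hf₁L2 : MemLp f₁ 2 (volume.restrict (Icc 0 T)))
    (hAmono : MonotoneOn A (Icc 0 T))
    (hArc : ∀ t ∈ Icc (0:ℝ) T, ContinuousWithinAt A (Ici t) t)
    (hA0 : A 0 = 0)
    (hf : ∀ t ∈ Icc (0:ℝ) T, f₁ t = f₂ t + A t)
    (x₁ x₂ : ℝ) (hx : x₂ < x₁)
    (y₁ y₂ : ℝ → ℝ)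
    (hy₁rc : ∀ t ∈ Icc (0:ℝ) T, ContinuousWithinAt y₁ (Ici t) t)
    (hy₂rc : ∀ t ∈ Icc (0:ℝ) T, ContinuousWithinAt y₂ (Ici t) t)
    (hy₁L2 : MemLp y₁ 2 (volume.restrict (Icc 0 T)))
    (hy₂L2 : MemLp y₂ 2 (volume.restrict (Icc 0 T)))
    (heq₁ : ∀ t ∈ Icc (0:ℝ) T, y₁ t = x₁ + (∫ s in (0:ℝ)..t, b₁ s (y₁ s)) + f₁ t)
    (heq₂ : ∀ t ∈ Icc (0:ℝ) T, y₂ t = x₂ + (∫ s in (0:ℝ)..t, b₂ s (y₂ s)) + f₂ t)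
    (hcomp : ∀ᵐ t ∂(volume.restrict (Icc (0:ℝ) T)), b₂ t (y₂ t) ≤ b₁ t (y₂ t)) :
    ∀ t ∈ Icc (0:ℝ) T, y₂ t < y₁ t := by
  haveI := finite_restrict T
  set z : ℝ → ℝ := fun t => y₁ t - y₂ t with hzdef
  set g : ℝ → ℝ := fun s => b₁ s (y₁ s) - b₂ s (y₂ s) with hgdef
  have hb₁i : IntegrableOn (fun s => b₁ s (y₁ s)) (Icc 0 T) volume :=
    aux_int T b₁ C hb₁m hb₁lip hb₁0 y₁ hy₁L2
  have hb₂i : IntegrableOn (fun s => b₂ s (y₂ s)) (Icc 0 T) volume :=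
    aux_int T b₂ C hb₂m hb₂lip hb₂0 y₂ hy₂L2
  have hgi : IntegrableOn g (Icc 0 T) volume := hb₁i.sub hb₂i
  have hzi : IntegrableOn z (Icc 0 T) volume :=
    (hy₁L2.integrable one_le_two).sub (hy₂L2.integrable one_le_two)
  -- interval integrability on subintervals
  have hII : ∀ (F : ℝ → ℝ), IntegrableOn F (Icc 0 T) volume → ∀ u v : ℝ, 0 ≤ u → v ≤ T → u ≤ v →
      IntervalIntegrable F volume u v := by
    intro F hF u v hu hv huv
    refine (hF.mono_set ?_).intervalIntegrable
    rw [Set.uIcc_of_le huv]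
    exact Icc_subset_Icc hu hv
  -- the global formula for z
  have hz_eq : ∀ t ∈ Icc (0:ℝ) T, z t = (x₁ - x₂) + (∫ s in (0:ℝ)..t, g s) + A t := by
    intro t ht
    have h1 := heq₁ t ht
    have h2 := heq₂ t ht
    have h3 := hf t ht
    have hsub : (∫ s in (0:ℝ)..t, b₁ s (y₁ s)) - (∫ s in (0:ℝ)..t, b₂ s (y₂ s))
        = ∫ s in (0:ℝ)..t, g s :=
      (intervalIntegral.integral_sub (hII _ hb₁i 0 t le_rfl ht.2 ht.1)
        (hII _ hb₂i 0 t le_rfl ht.2 ht.1)).symm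
    simp only [hzdef]
    rw [h1, h2, h3, ← hsub]
    ring
  have hz0 : z 0 = x₁ - x₂ := by
    have := hz_eq 0 ⟨le_rfl, hT.le⟩
    simpa [hA0] using this
  -- suffices positivity of z
  suffices key : ∀ t ∈ Icc (0:ℝ) T, 0 < z t by
    intro t ht
    have := key t ht
    simp only [hzdef] at this
    linarith
  by_contra hcon
  push_neg at hcon
  obtain ⟨t₁, ht₁, ht₁z⟩ := hcon
  set S : Set ℝ := {t | t ∈ Icc (0:ℝ) T ∧ z t ≤ 0} with hSdef
  have hSne : S.Nonempty := ⟨t₁, ht₁, ht₁z⟩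
  have hSbdd : BddBelow S := ⟨0, fun x hx => hx.1.1⟩
  set τ := sInf S with hτdef
  have hτle : ∀ x ∈ S, τ ≤ x := fun x hx => csInf_le hSbdd hx
  have hτ0 : 0 ≤ τ := le_csInf hSne fun x hx => hx.1.1
  have hτT : τ ≤ T := (hτle t₁ ⟨ht₁, ht₁z⟩).trans ht₁.2
  have hτmem : τ ∈ Icc (0:ℝ) T := ⟨hτ0, hτT⟩
  -- z τ ≤ 0 by right continuity
  have hzτ : z τ ≤ 0 := by
    have hzc : ContinuousWithinAt z (Ici τ) τ :=
      (hy₁rc τ hτmem).sub (hy₂rc τ hτmem)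
    have hsubS : S ⊆ Ici τ := fun x hx => hτle x hx
    have hcl : τ ∈ closure S := csInf_mem_closure hSne hSbdd
    have h1 : z τ ∈ closure (z '' S) := (hzc.mono hsubS).mem_closure_image hcl
    have h2 : z '' S ⊆ Iic (0:ℝ) := by rintro _ ⟨x, hx, rfl⟩; exact hx.2
    have h3 := closure_mono h2 h1
    rwa [closure_Iic, mem_Iic] at h3
  have hτpos : 0 < τ := by
    rcases hτ0.lt_or_eq with h | h
    · exact h
    · exfalso; have h' : z τ ≤ 0 := hzτ; rw [← h] at h'; linarith
  -- positivity before τ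
  have hpos : ∀ s : ℝ, 0 ≤ s → s < τ → 0 < z s := by
    intro s h0s hsτ
    by_contra hc
    push_neg at hc
    exact absurd (hτle s ⟨⟨h0s, hsτ.le.trans hτT⟩, hc⟩) (not_le.mpr hsτ)
  -- window setup
  set c : ℝ := (C : ℝ) with hcdef
  have hc0 : 0 ≤ c := C.coe_nonneg
  set δ : ℝ := 1 / (2 * (c + 1)) with hδdef
  have hδpos : 0 < δ := by positivity
  set t₀ : ℝ := max 0 (τ - δ) with ht₀def
  have ht₀0 : 0 ≤ t₀ := le_max_left _ _
  have ht₀τ : t₀ < τ := max_lt hτpos (by linarith)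
  have ht₀δ : τ - t₀ ≤ δ := by
    have : τ - δ ≤ t₀ := le_max_right _ _
    linarith
  have hcδ : c * (τ - t₀) ≤ 1 / 2 := by
    have h1 : c * (τ - t₀) ≤ c * δ := mul_le_mul_of_nonneg_left ht₀δ hc0
    have h2 : c * δ ≤ 1 / 2 := by
      rw [hδdef, mul_one_div, div_le_div_iff₀ (by positivity) (by norm_num)]
      linarith
    linarith
  have hzt₀pos : 0 < z t₀ := hpos t₀ ht₀0 ht₀τ
  -- the key monotonicity step
  have hstep : ∀ u v : ℝ, t₀ ≤ u → u ≤ v → v ≤ τ →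
      z u + c * ∫ s in t₀..u, z s ≤ z v + c * ∫ s in t₀..v, z s := by
    intro u v huu huv hvτ
    have hu0 : 0 ≤ u := ht₀0.trans huu
    have hvT : v ≤ T := hvτ.trans hτT
    have huT : u ≤ T := huv.trans hvT
    have humem : u ∈ Icc (0:ℝ) T := ⟨hu0, huT⟩
    have hvmem : v ∈ Icc (0:ℝ) T := ⟨hu0.trans huv, hvT⟩
    -- z v - z u = ∫_u^v g + (A v - A u)
    have hgv := hz_eq v hvmem
    have hgu := hz_eq u humem
    have hzz : z v - z u = (∫ s in u..v, g s) + (A v - A u) := by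
      rw [hgv, hgu]
      have := intervalIntegral.integral_interval_sub_left
        (hII g hgi 0 v le_rfl hvT (hu0.trans huv)) (hII g hgi 0 u le_rfl huT hu0)
      rw [← this]; ring
    have hzint : (∫ s in t₀..v, z s) - ∫ s in t₀..u, z s = ∫ s in u..v, z s := by
      exact intervalIntegral.integral_interval_sub_left
        (hII z hzi t₀ v ht₀0 hvT (huu.trans huv)) (hII z hzi t₀ u ht₀0 huT huu)
    -- the nonneg integral
    have hgz : 0 ≤ ∫ s in u..v, (g s + c * z s) := by
      apply intervalIntegral.integral_nonneg_of_ae_restrict huv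
      have hsub : Icc u v ⊆ Icc (0:ℝ) T := Icc_subset_Icc hu0 hvT
      have hcomp' : ∀ᵐ s ∂(volume.restrict (Icc u v)), b₂ s (y₂ s) ≤ b₁ s (y₂ s) :=
        ae_restrict_of_ae_restrict_of_subset hsub hcomp
      have hne : ∀ᵐ s ∂(volume : Measure ℝ), s ≠ τ := by
        rw [ae_iff]
        have : {s : ℝ | ¬ s ≠ τ} = {τ} := by ext x; simp
        rw [this]
        exact measure_singleton τ
      have hne' : ∀ᵐ s ∂(volume.restrict (Icc u v)), s ≠ τ := ae_restrict_of_ae hne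
      have hmem' : ∀ᵐ s ∂(volume.restrict (Icc u v)), s ∈ Icc u v :=
        ae_restrict_mem measurableSet_Icc
      filter_upwards [hcomp', hne', hmem'] with s hs₁ hs₂ hs₃
      have hsτ : s < τ := lt_of_le_of_ne (hs₃.2.trans hvτ) hs₂
      have hzs : 0 ≤ z s := (hpos s (ht₀0.trans (huu.trans hs₃.1)) hsτ).le
      have hlip : |b₁ s (y₁ s) - b₁ s (y₂ s)| ≤ c * |z s| := by
        have := (hb₁lip s).dist_le_mul (y₁ s) (y₂ s)
        simpa [Real.dist_eq] using this
      have h1 : -(c * |z s|) ≤ b₁ s (y₁ s) - b₁ s (y₂ s) := by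
        have := (abs_le.mp hlip).1; linarith
      have habs : |z s| = z s := abs_of_nonneg hzs
      simp only [hgdef, Pi.zero_apply]
      rw [habs] at h1
      linarith
    have hsplit : (∫ s in u..v, (g s + c * z s))
        = (∫ s in u..v, g s) + c * ∫ s in u..v, z s := by
      rw [intervalIntegral.integral_add (hII g hgi u v hu0 hvT huv)
        ((hII z hzi u v hu0 hvT huv).const_mul c), intervalIntegral.integral_const_mul]
    have hA : A u ≤ A v := hAmono humem hvmem huv
    rw [hsplit] at hgz
    have hzint' : c * (∫ s in t₀..v, z s) - c * ∫ s in t₀..u, z s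
        = c * ∫ s in u..v, z s := by rw [← hzint]; ring
    linarith
  -- conclude
  set Iz : ℝ := ∫ s in t₀..τ, z s with hIzdef
  set hτval : ℝ := z τ + c * Iz with hτvaldef
  clear_value Iz hτval
  have h1 : z t₀ ≤ hτval := by
    have h0 := hstep t₀ τ le_rfl ht₀τ.le le_rfl
    rw [intervalIntegral.integral_same, mul_zero, add_zero, ← hIzdef, ← hτvaldef] at h0
    exact h0
  have hτvalpos : 0 < hτval := lt_of_lt_of_le hzt₀pos h1
  -- z s ≤ hτval on [t₀, τ]
  have hzle : ∀ s ∈ Icc t₀ τ, z s ≤ hτval := by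
    intro s hs
    rcases hs.2.lt_or_eq with hlt | heq
    · have h2 := hstep s τ hs.1 hlt.le le_rfl
      have h3 : 0 ≤ ∫ x in t₀..s, z x :=
        intervalIntegral.integral_nonneg hs.1 fun x hx =>
          (hpos x (ht₀0.trans hx.1) (lt_of_le_of_lt hx.2 hlt)).le
      have h4 : 0 ≤ c * ∫ x in t₀..s, z x := mul_nonneg hc0 h3
      rw [← hIzdef, ← hτvaldef] at h2
      linarith
    · rw [heq]; linarith
  have hIbound : Iz ≤ (τ - t₀) * hτval := by
    have := intervalIntegral.integral_mono_on ht₀τ.le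
      (hII z hzi t₀ τ ht₀0 hτT ht₀τ.le) intervalIntegrable_const hzle
    rw [intervalIntegral.integral_const, smul_eq_mul, ← hIzdef] at this
    exact this
  have hfinal : 0 < z τ := by
    have h5 : c * Iz ≤ c * ((τ - t₀) * hτval) := mul_le_mul_of_nonneg_left hIbound hc0
    have h6 : c * ((τ - t₀) * hτval) ≤ (1 / 2) * hτval := by
      rw [← mul_assoc]
      exact mul_le_mul_of_nonneg_right hcδ hτvalpos.le
    have h7 : z τ = hτval - c * Iz := by rw [hτvaldef]; ring
    linarith
  linarith
end
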